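/- Let P = (x₁,...,xₙ) with Σxᵢ = 0 and Σ|xᵢ| = 2α for α > 0, k ∈ [n-1], and X_P the sum of a uniformly random k-subset. Then for every t ∈ (0, 4k(n-k)α/(n²(n-1))): P(X_P ≥ t) ≥ (2α/(α-t))·(k(n-k)/(n²(n-1))) - t/(2(α-t)). -/

import Mathlib

open Finset

set_option maxHeartbeats 1000000 in
lemma aux_count_mem {n k : ℕ} (hk1 : 1 ≤ k) (i : Fin n) :
    (((univ : Finset (Fin n)).powersetCard k).filter (fun F => i ∈ F)).card
      = (n - 1).choose (k - 1) := by
  have htarget : (((univ : Finset (Fin n)).erase i).powersetCard (k-1)).card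
      = (n-1).choose (k-1) := by
    rw [card_powersetCard, card_erase_of_mem (mem_univ i), card_univ, Fintype.card_fin]
  rw [← htarget]
  apply card_bij (fun F _ => F.erase i)
  · intro F hF
    simp only [mem_filter, mem_powersetCard] at hF
    refine mem_powersetCard.2 ⟨erase_subset_erase i hF.1.1, ?_⟩
    rw [card_erase_of_mem hF.2, hF.1.2]
  · intro F hF G hG h
    simp only [mem_filter] at hF hG
    rw [← insert_erase hF.2, ← insert_erase hG.2, h]
  · intro G hG
    rw [mem_powersetCard] at hG
    have hiG : i ∉ G := fun hiG => (mem_erase.1 (hG.1 hiG)).1 rfl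
    refine ⟨insert i G, ?_, erase_insert hiG⟩
    simp only [mem_filter, mem_powersetCard]
    refine ⟨⟨subset_univ _, ?_⟩, mem_insert_self i G⟩
    rw [card_insert_of_notMem hiG, hG.2]
    omega

lemma aux_count_mem_not {n k : ℕ} (hk1 : 1 ≤ k) {i j : Fin n} (hij : i ≠ j) :
    (((univ : Finset (Fin n)).powersetCard k).filter (fun F => i ∈ F ∧ j ∉ F)).card
      = (n - 2).choose (k - 1) := by
  have htarget : (((((univ : Finset (Fin n)).erase j)).erase i).powersetCard (k-1)).card
      = (n-2).choose (k-1) := by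
    rw [card_powersetCard, card_erase_of_mem (mem_erase.2 ⟨hij, mem_univ i⟩),
      card_erase_of_mem (mem_univ j), card_univ, Fintype.card_fin, Nat.sub_sub]
  rw [← htarget]
  apply card_bij (fun F _ => F.erase i)
  · intro F hF
    simp only [mem_filter, mem_powersetCard] at hF
    refine mem_powersetCard.2 ⟨?_, ?_⟩
    · intro a ha
      rw [mem_erase] at ha ⊢
      exact ⟨ha.1, mem_erase.2 ⟨fun h => hF.2.2 (h ▸ ha.2), mem_univ a⟩⟩
    · rw [card_erase_of_mem hF.2.1, hF.1.2]
  · intro F hF G hG h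
    simp only [mem_filter] at hF hG
    rw [← insert_erase hF.2.1, ← insert_erase hG.2.1, h]
  · intro G hG
    rw [mem_powersetCard] at hG
    have hiG : i ∉ G := fun hiG => (mem_erase.1 (hG.1 hiG)).1 rfl
    have hjG : j ∉ G := fun hjG => (mem_erase.1 (mem_erase.1 (hG.1 hjG)).2).1 rfl
    refine ⟨insert i G, ?_, erase_insert hiG⟩
    simp only [mem_filter, mem_powersetCard]
    refine ⟨⟨subset_univ _, ?_⟩, mem_insert_self i G, ?_⟩
    · rw [card_insert_of_notMem hiG, hG.2]; omega
    · simp only [mem_insert]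
      exact fun h => h.elim (fun h => hij h.symm) hjG

lemma choose_identity {n k : ℕ} (h1 : 1 ≤ k) (h2 : k ≤ n - 1) (hn : 2 ≤ n) :
    k * (n - k) * n.choose k = n * ((n - 1) * (n - 2).choose (k - 1)) := by
  have e1 : n * (n-1).choose (k-1) = n.choose k * k := by
    have := Nat.add_one_mul_choose_eq (n-1) (k-1)
    rwa [Nat.sub_add_cancel (by omega),
      Nat.sub_add_cancel h1] at this
  have e2 : (n - 1) * (n-2).choose (k-1) = (n-1).choose (k-1) * (n - k) := by
    have := Nat.add_one_mul_choose_eq (n-2) (n-k-1)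
    rw [show n - 2 + 1 = n - 1 by omega,
      show n - k - 1 + 1 = n - k by omega, show n - k - 1 = (n-2) - (k-1) by omega,
      Nat.choose_symm (by omega), show n - k = (n-1) - (k-1) by omega,
      Nat.choose_symm (by omega), show (n-1) - (k-1) = n - k by omega] at this
    exact this
  calc k * (n - k) * n.choose k = (n.choose k * k) * (n - k) := by ring
    _ = (n * (n-1).choose (k-1)) * (n - k) := by rw [e1]
    _ = n * ((n-1).choose (k-1) * (n - k)) := by ring
    _ = n * ((n - 1) * (n - 2).choose (k - 1)) := by rw [e2]


set_option maxHeartbeats 1000000 in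
/-- Lower bound on `P(X_P ≥ t)` for moderate `t > 0`. -/
theorem prob_tail_lower_bound
    {n : ℕ} (hn : 2 ≤ n) (k : ℕ) (hk : k ∈ Finset.Icc 1 (n - 1))
    (α : ℝ) (hα : 0 < α)
    (x : Fin n → ℝ) (hsum : ∑ i, x i = 0) (habs : ∑ i, |x i| = 2 * α)
    (t : ℝ) (ht : t ∈ Set.Ioo 0 (4 * k * ((n : ℝ) - k) * α / ((n : ℝ) ^ 2 * ((n : ℝ) - 1)))) :
    2 * α / (α - t) * ((k : ℝ) * ((n : ℝ) - k) / ((n : ℝ) ^ 2 * ((n : ℝ) - 1)))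
        - t / (2 * (α - t))
      ≤ (((univ : Finset (Fin n)).powersetCard k |>.filter
            (fun F => t ≤ ∑ i ∈ F, x i)).card : ℝ) / (n.choose k : ℝ) := by
  obtain ⟨hk1, hk2⟩ := Finset.mem_Icc.1 hk
  obtain ⟨ht0, ht1⟩ := ht
  have hkn : k ≤ n := by omega
  set S : Finset (Finset (Fin n)) := (univ : Finset (Fin n)).powersetCard k with hSdef
  set T : Finset (Finset (Fin n)) := S.filter (fun F => t ≤ ∑ i ∈ F, x i) with hTdef
  -- real abbreviations
  have hkr1 : (1:ℝ) ≤ (k:ℝ) := by exact_mod_cast hk1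
  have hkr2 : (k:ℝ) ≤ (n:ℝ) - 1 := by
    have : (k:ℝ) ≤ ((n-1:ℕ):ℝ) := by exact_mod_cast hk2
    rwa [Nat.cast_sub (by omega), Nat.cast_one] at this
  have hnr : (2:ℝ) ≤ (n:ℝ) := by exact_mod_cast hn
  have hNpos : (0:ℝ) < (n.choose k : ℝ) := by exact_mod_cast Nat.choose_pos hkn
  have hScard : (S.card : ℝ) = (n.choose k : ℝ) := by
    rw [hSdef, card_powersetCard, card_univ, Fintype.card_fin]
  have hd1 : (0:ℝ) < (n:ℝ) - 1 := by linarith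
  have hd2 : (0:ℝ) < (n:ℝ)^2 * ((n:ℝ) - 1) := by nlinarith
  have hkk : (0:ℝ) < (k:ℝ) * ((n:ℝ) - (k:ℝ)) := by nlinarith
  -- t < α
  have hF4 : 4 * ((k:ℝ) * ((n:ℝ) - k)) ≤ (n:ℝ)^2 := by nlinarith [sq_nonneg ((n:ℝ) - 2*(k:ℝ))]
  have htα : t < α := by
    have : 4 * (k:ℝ) * ((n : ℝ) - k) * α / ((n : ℝ) ^ 2 * ((n : ℝ) - 1)) ≤ α := by
      rw [div_le_iff₀ hd2]
      nlinarith [mul_le_mul_of_nonneg_right hF4 hα.le,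
        mul_le_mul_of_nonneg_right (show (n:ℝ)^2 * 1 ≤ (n:ℝ)^2 * ((n:ℝ)-1) by nlinarith [sq_nonneg (n:ℝ)]) hα.le]
    linarith
  have hαt : (0:ℝ) < α - t := by linarith
  -- each subset sum is at most α
  have hsle : ∀ F : Finset (Fin n), ∑ i ∈ F, x i ≤ α := by
    intro F
    have h1 : ∑ i ∈ F, x i ≤ ∑ i ∈ F, (x i + |x i|)/2 := by
      refine Finset.sum_le_sum fun i _ => ?_
      have := le_abs_self (x i); linarith
    have h2 : ∑ i ∈ F, (x i + |x i|)/2 ≤ ∑ i : Fin n, (x i + |x i|)/2 := by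
      refine Finset.sum_le_sum_of_subset_of_nonneg (subset_univ F) fun i _ _ => ?_
      have := neg_abs_le (x i); linarith
    have h3 : ∑ i : Fin n, (x i + |x i|)/2 = α := by
      rw [← Finset.sum_div, Finset.sum_add_distrib, hsum, habs]; ring
    linarith
  -- sum of all subset sums is zero
  have hsum0 : ∑ F ∈ S, ∑ i ∈ F, x i = 0 := by
    have e1 : ∀ F ∈ S, ∑ i ∈ F, x i = ∑ i : Fin n, if i ∈ F then x i else 0 := by
      intro F _; rw [Finset.sum_ite_mem, univ_inter]
    rw [Finset.sum_congr rfl e1, Finset.sum_comm]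
    have e2 : ∀ i : Fin n, ∑ F ∈ S, (if i ∈ F then x i else 0)
        = ((n-1).choose (k-1) : ℝ) * x i := by
      intro i
      rw [Finset.sum_ite, Finset.sum_const_zero, add_zero, Finset.sum_const,
        aux_count_mem hk1 i, nsmul_eq_mul]
    rw [Finset.sum_congr rfl (fun i _ => e2 i), ← Finset.mul_sum, hsum, mul_zero]
  -- the triple set
  set A : Finset (Finset (Fin n) × Fin n × Fin n) :=
    (S ×ˢ ((univ : Finset (Fin n)) ×ˢ (univ : Finset (Fin n)))).filter
      (fun p => p.2.1 ∈ p.1 ∧ p.2.2 ∉ p.1) with hAdef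
  have hAmem : ∀ (F : Finset (Fin n)) (i j : Fin n),
      (F, i, j) ∈ A ↔ (F ∈ S ∧ i ∈ F ∧ j ∉ F) := by
    intro F i j
    simp [hAdef, Finset.mem_filter, Finset.mem_product]
  -- rearrangement 1 : group by F
  have hA1 : ∀ h : Finset (Fin n) → ℝ,
      ∑ p ∈ A, h p.1 = (k*(n-k)) • ∑ F ∈ S, h F := by
    intro h
    rw [hAdef, Finset.sum_filter, Finset.sum_product, Finset.smul_sum]
    dsimp only
    refine Finset.sum_congr rfl fun F hF => ?_
    have hcard : F.card = k := (mem_powersetCard.1 hF).2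
    rw [← Finset.sum_filter, Finset.sum_const]
    congr 1
    have : ((univ : Finset (Fin n)) ×ˢ (univ : Finset (Fin n))).filter
        (fun q => q.1 ∈ F ∧ q.2 ∉ F)
        = (univ.filter (fun i => i ∈ F)) ×ˢ (univ.filter (fun j => j ∉ F)) := by
      ext ⟨i, j⟩
      simp only [Finset.mem_filter, Finset.mem_product, Finset.mem_univ, true_and]
    rw [this, Finset.card_product]
    congr 1
    · rw [Finset.filter_mem_eq_inter, univ_inter, hcard]
    · rw [Finset.filter_not, Finset.filter_mem_eq_inter, univ_inter,
        Finset.card_sdiff_of_subset (subset_univ F), hcard, card_univ, Fintype.card_fin]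
  -- rearrangement 2 : group by (i,j)
  have hA3 : ∀ h : Fin n → Fin n → ℝ,
      ∑ p ∈ A, h p.2.1 p.2.2
        = ∑ i : Fin n, ∑ j : Fin n,
            ((S.filter (fun F => i ∈ F ∧ j ∉ F)).card) • h i j := by
    intro h
    rw [hAdef, Finset.sum_filter, Finset.sum_product]
    dsimp only
    rw [Finset.sum_comm, Finset.sum_product]
    dsimp only
    refine Finset.sum_congr rfl fun i _ => Finset.sum_congr rfl fun j _ => ?_
    rw [← Finset.sum_filter, Finset.sum_const]
  -- the swap involution
  have hswapmem : ∀ p ∈ A, (insert p.2.2 (p.1.erase p.2.1), p.2.2, p.2.1) ∈ A := by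
    rintro ⟨F, i, j⟩ hp
    rw [hAmem] at hp ⊢
    obtain ⟨hFS, hi, hj⟩ := hp
    have hij : i ≠ j := fun h => hj (h ▸ hi)
    have hjF : j ∉ F.erase i := fun h => hj (Finset.mem_of_mem_erase h)
    have hcard : F.card = k := (mem_powersetCard.1 (hSdef ▸ hFS)).2
    refine ⟨?_, Finset.mem_insert_self _ _, ?_⟩
    · rw [hSdef, mem_powersetCard]
      refine ⟨subset_univ _, ?_⟩
      rw [Finset.card_insert_of_notMem hjF, Finset.card_erase_of_mem hi, hcard]
      omega
    · simp only [Finset.mem_insert, not_or]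
      exact ⟨hij, Finset.notMem_erase i F⟩
  have hswapswap : ∀ p ∈ A,
      (insert p.2.1 ((insert p.2.2 (p.1.erase p.2.1)).erase p.2.2), p.2.1, p.2.2) = p := by
    rintro ⟨F, i, j⟩ hp
    rw [hAmem] at hp
    obtain ⟨_, hi, hj⟩ := hp
    have hjF : j ∉ F.erase i := fun h => hj (Finset.mem_of_mem_erase h)
    rw [Finset.erase_insert hjF, Finset.insert_erase hi]
  have hA2 : ∑ p ∈ A, |∑ a ∈ insert p.2.2 (p.1.erase p.2.1), x a - t|
      = ∑ p ∈ A, |∑ a ∈ p.1, x a - t| := by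
    refine Finset.sum_nbij' (i := fun p => (insert p.2.2 (p.1.erase p.2.1), p.2.2, p.2.1))
      (j := fun p => (insert p.2.2 (p.1.erase p.2.1), p.2.2, p.2.1))
      hswapmem hswapmem ?_ ?_ ?_
    · rintro ⟨F, i, j⟩ hp
      exact hswapswap (F, i, j) hp
    · rintro ⟨F, i, j⟩ hp
      exact hswapswap (F, i, j) hp
    · rintro ⟨F, i, j⟩ _
      rfl
  -- swapped subset sum
  have hswapsum : ∀ p ∈ A, ∑ a ∈ insert p.2.2 (p.1.erase p.2.1), x a
      = ∑ a ∈ p.1, x a - x p.2.1 + x p.2.2 := by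
    rintro ⟨F, i, j⟩ hp
    rw [hAmem] at hp
    obtain ⟨_, hi, hj⟩ := hp
    have hjF : j ∉ F.erase i := fun h => hj (Finset.mem_of_mem_erase h)
    rw [Finset.sum_insert hjF, Finset.sum_erase_eq_sub hi]
    ring
  -- pointwise triangle inequality on A
  have hpoint : ∀ p ∈ A, |x p.2.1 - x p.2.2|
      ≤ |∑ a ∈ p.1, x a - t| + |∑ a ∈ insert p.2.2 (p.1.erase p.2.1), x a - t| := by
    intro p hp
    have h1 := hswapsum p hp
    have h2 := abs_add_le (∑ a ∈ p.1, x a - t)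
      (t - ∑ a ∈ insert p.2.2 (p.1.erase p.2.1), x a)
    rw [abs_sub_comm t] at h2
    have h3 : x p.2.1 - x p.2.2
        = (∑ a ∈ p.1, x a - t) + (t - ∑ a ∈ insert p.2.2 (p.1.erase p.2.1), x a) := by
      rw [h1]; ring
    rw [h3]
    exact h2
  -- lower bound on the pairwise abs sum
  have habs2 : 2*α*(n:ℝ) ≤ ∑ i : Fin n, ∑ j : Fin n, |x i - x j| := by
    have h1 : ∀ i : Fin n, (n:ℝ) * |x i| ≤ ∑ j : Fin n, |x i - x j| := by
      intro i
      have e : (n:ℝ) * x i = ∑ j : Fin n, (x i - x j) := by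
        rw [Finset.sum_sub_distrib, hsum, Finset.sum_const, card_univ, Fintype.card_fin,
          sub_zero, nsmul_eq_mul]
      calc (n:ℝ)*|x i| = |(n:ℝ) * x i| := by
            rw [abs_mul, Nat.abs_cast]
        _ = |∑ j : Fin n, (x i - x j)| := by rw [e]
        _ ≤ ∑ j : Fin n, |x i - x j| := Finset.abs_sum_le_sum_abs _ _
    calc 2*α*(n:ℝ) = ∑ _i : Fin n, 2*α := by
          rw [Finset.sum_const, card_univ, Fintype.card_fin, nsmul_eq_mul]; ring
      _ = ∑ i : Fin n, (n:ℝ)*|x i| := by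
          rw [← Finset.mul_sum (a := (n:ℝ)), habs, Finset.sum_const, card_univ,
            Fintype.card_fin, nsmul_eq_mul]
          try ring
      _ ≤ _ := Finset.sum_le_sum (fun i _ => h1 i)
  -- main sum lower bound
  set G : ℝ := ∑ F ∈ S, |∑ a ∈ F, x a - t| with hGdef
  set Tc : ℝ := (T.card : ℝ) with hTcdef
  set Nr : ℝ := (n.choose k : ℝ) with hNrdef
  set cr : ℝ := ((n-2).choose (k-1) : ℝ) with hcrdef
  have hTcnn : (0:ℝ) ≤ Tc := Nat.cast_nonneg _
  have hcastkk : ((k*(n-k) : ℕ) : ℝ) = (k:ℝ) * ((n:ℝ) - (k:ℝ)) := by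
    push_cast [Nat.cast_sub hkn]; ring
  have hkey : cr * (2*α*(n:ℝ)) ≤ 2 * ((k:ℝ) * ((n:ℝ) - k)) * G := by
    have c1 : ∑ p ∈ A, |x p.2.1 - x p.2.2|
        ≤ ∑ p ∈ A, (|∑ a ∈ p.1, x a - t| + |∑ a ∈ insert p.2.2 (p.1.erase p.2.1), x a - t|) :=
      Finset.sum_le_sum hpoint
    have c2 : ∑ p ∈ A, (|∑ a ∈ p.1, x a - t| + |∑ a ∈ insert p.2.2 (p.1.erase p.2.1), x a - t|)
        = 2 * ((k:ℝ) * ((n:ℝ) - k)) * G := by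
      rw [Finset.sum_add_distrib, hA2, hA1 (fun F => |∑ a ∈ F, x a - t|), nsmul_eq_mul,
        hcastkk]
      ring
    have c3 : ∑ p ∈ A, |x p.2.1 - x p.2.2|
        = ∑ i : Fin n, ∑ j : Fin n, ((S.filter (fun F => i ∈ F ∧ j ∉ F)).card) • |x i - x j| :=
      hA3 (fun i j => |x i - x j|)
    have c4 : ∑ i : Fin n, ∑ j : Fin n, ((S.filter (fun F => i ∈ F ∧ j ∉ F)).card) • |x i - x j|
        = cr * ∑ i : Fin n, ∑ j : Fin n, |x i - x j| := by
      rw [Finset.mul_sum]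
      refine Finset.sum_congr rfl fun i _ => ?_
      rw [Finset.mul_sum]
      refine Finset.sum_congr rfl fun j _ => ?_
      rcases eq_or_ne i j with h | h
      · subst h; simp
      · rw [aux_count_mem_not hk1 h, nsmul_eq_mul]
    have c5 : cr * (2*α*(n:ℝ)) ≤ cr * ∑ i : Fin n, ∑ j : Fin n, |x i - x j| :=
      mul_le_mul_of_nonneg_left habs2 (Nat.cast_nonneg _)
    linarith [c5, c4, c3, c1, c2]
  -- cast of the choose identity
  have hchoose : (k:ℝ) * ((n:ℝ) - k) * Nr = (n:ℝ) * (((n:ℝ)-1) * cr) := by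
    have h0 := choose_identity hk1 hk2 hn
    have h1 : ((k * (n-k) * n.choose k : ℕ) : ℝ)
        = ((n * ((n-1) * (n-2).choose (k-1)) : ℕ) : ℝ) := by exact_mod_cast congrArg (fun m : ℕ => (m:ℝ)) h0
    push_cast [Nat.cast_sub hkn, Nat.cast_sub (show 1 ≤ n by omega)] at h1
    rw [hNrdef, hcrdef]
    push_cast
    linarith [h1]
  -- G lower bound
  have hGlb : α * Nr ≤ ((n:ℝ) - 1) * G := by
    have hpos1 : (0:ℝ) < (k:ℝ)*((n:ℝ)-(k:ℝ)) * (n:ℝ) := by nlinarith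
    rw [← mul_le_mul_iff_right₀ hpos1]
    calc (k:ℝ)*((n:ℝ)-(k:ℝ))*(n:ℝ) * (α * Nr)
        = (n:ℝ) * α * ((k:ℝ)*((n:ℝ)-(k:ℝ))*Nr) := by ring
      _ = (n:ℝ) * α * ((n:ℝ) * (((n:ℝ)-1) * cr)) := by rw [hchoose]
      _ = ((n:ℝ)*((n:ℝ)-1)/2) * (cr * (2*α*(n:ℝ))) := by ring
      _ ≤ ((n:ℝ)*((n:ℝ)-1)/2) * (2*((k:ℝ)*((n:ℝ)-k))*G) := by
          apply mul_le_mul_of_nonneg_left hkey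
          nlinarith
      _ = (k:ℝ)*((n:ℝ)-(k:ℝ))*(n:ℝ) * (((n:ℝ)-1) * G) := by ring
  -- sum over S of (s F - t)
  have hSsum_t : ∑ F ∈ S, (∑ a ∈ F, x a - t) = - t * Nr := by
    rw [Finset.sum_sub_distrib, hsum0, Finset.sum_const, nsmul_eq_mul, hScard]
    ring
  -- positive part identity
  have hTpos : ∑ F ∈ T, (∑ a ∈ F, x a - t) = (G + (- t * Nr))/2 := by
    have e : ∀ F ∈ S, (if t ≤ ∑ a ∈ F, x a then (∑ a ∈ F, x a - t) else 0)
        = (|∑ a ∈ F, x a - t| + (∑ a ∈ F, x a - t))/2 := by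
      intro F _
      split_ifs with h
      · rw [abs_of_nonneg (by linarith)]; ring
      · push_neg at h
        rw [abs_of_neg (by linarith)]; ring
    rw [hTdef, Finset.sum_filter, Finset.sum_congr rfl e, ← Finset.sum_div,
      Finset.sum_add_distrib, hSsum_t]
  -- upper bound on tail sum
  have hTub : ∑ F ∈ T, (∑ a ∈ F, x a - t) ≤ (α - t) * Tc := by
    calc ∑ F ∈ T, (∑ a ∈ F, x a - t) ≤ ∑ _F ∈ T, (α - t) :=
          Finset.sum_le_sum fun F _ => by have := hsle F; linarith
      _ = (α - t) * Tc := by rw [Finset.sum_const, nsmul_eq_mul]; ring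
  have hTlb : G - t * Nr ≤ 2*(α-t)*Tc := by
    rw [hTpos] at hTub
    linarith
  -- final computation
  have key2 : (4*α*((k:ℝ)*((n:ℝ)-k)) - t*((n:ℝ)^2*((n:ℝ)-1))) * Nr
      ≤ 2*(α-t)*Tc*((n:ℝ)^2*((n:ℝ)-1)) := by
    have m1 : ((n:ℝ)^2) * (α * Nr) ≤ ((n:ℝ)^2) * (((n:ℝ)-1)*G) :=
      mul_le_mul_of_nonneg_left hGlb (sq_nonneg _)
    have m2 : 4*((k:ℝ)*((n:ℝ)-k)) * (α*Nr) ≤ (n:ℝ)^2 * (α*Nr) := by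
      apply mul_le_mul_of_nonneg_right hF4
      have : (0:ℝ) ≤ Nr := Nat.cast_nonneg _
      positivity
    have m3 : (G - t*Nr) * ((n:ℝ)^2*((n:ℝ)-1)) ≤ 2*(α-t)*Tc*((n:ℝ)^2*((n:ℝ)-1)) :=
      mul_le_mul_of_nonneg_right hTlb hd2.le
    nlinarith [m1, m2, m3]
  have hne1 : (α - t) ≠ 0 := ne_of_gt hαt
  have hne2 : ((n:ℝ)^2*((n:ℝ)-1)) ≠ 0 := ne_of_gt hd2
  have hne3 : (n:ℝ) ≠ 0 := by positivity
  have hne4 : ((n:ℝ)-1) ≠ 0 := ne_of_gt hd1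
  rw [le_div_iff₀ hNpos]
  have expand : (2 * α / (α - t) * ((k : ℝ) * ((n : ℝ) - k) / ((n : ℝ) ^ 2 * ((n : ℝ) - 1)))
        - t / (2 * (α - t))) * Nr
      = ((4*α*((k:ℝ)*((n:ℝ)-k)) - t*((n:ℝ)^2*((n:ℝ)-1))) * Nr)
        / (2*(α-t)*((n:ℝ)^2*((n:ℝ)-1))) := by
    field_simp
    ring
  rw [expand, div_le_iff₀ (by nlinarith : (0:ℝ) < 2*(α-t)*((n:ℝ)^2*((n:ℝ)-1)))]
  linarith [key2]
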